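/- Let M = ⊕_{i∈I} M_i with Hom_R(M_i, M_j) = 0 for i ≠ j, and suppose M = N ⊕ L. Then N = ⊕_{i∈I} (N ∩ M_i). -/

import Mathlib

universe u v w

theorem stmt11 (R : Type u) [Ring R] (M : Type v) [AddCommGroup M] [Module R M]
    (ι : Type w) [DecidableEq ι] (Mi : ι → Submodule R M)
    (hint : DirectSum.IsInternal Mi)
    (hhom : ∀ i j, i ≠ j → ∀ f : ↥(Mi i) →ₗ[R] ↥(Mi j), f = 0)
    (N L : Submodule R M) (h : IsCompl N L) :
    N = ⨆ i, N ⊓ Mi i := by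
  classical
  -- the internal direct sum equivalence
  set eqv : DirectSum ι (fun i => ↥(Mi i)) ≃ₗ[R] M := LinearEquiv.ofBijective (DirectSum.coeLinearMap Mi) hint
    with heqv
  have heqv_of : ∀ i (m : Mi i), eqv (DirectSum.of (fun i => ↥(Mi i)) i m) = (m : M) := by
    intro i m
    simp [heqv, LinearEquiv.ofBijective, DirectSum.coeLinearMap_of]
  -- full invariance of each Mi under endomorphisms of M
  have hfi : ∀ (f : M →ₗ[R] M) (i : ι) (x : M), x ∈ Mi i → f x ∈ Mi i := by
    intro f i x hx
    have hcomp : ∀ j, j ≠ i → (eqv.symm (f x)) j = 0 := by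
      intro j hj
      let g : ↥(Mi i) →ₗ[R] ↥(Mi j) :=
        (DirectSum.component R ι (fun i => ↥(Mi i)) j) ∘ₗ (eqv.symm : M →ₗ[R] _) ∘ₗ
          f ∘ₗ (Mi i).subtype
      have hg : g = 0 := hhom i j (fun e => hj e.symm) g
      have := congrFun (congrArg (fun (k : ↥(Mi i) →ₗ[R] ↥(Mi j)) => (k : ↥(Mi i) → ↥(Mi j))) hg)
        ⟨x, hx⟩
      simp [g, DirectSum.component] at this; exact this
    have hdec : eqv.symm (f x) = DirectSum.of (fun i => ↥(Mi i)) i ((eqv.symm (f x)) i) := by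
      refine DFinsupp.ext fun j => ?_
      by_cases hji : j = i
      · subst hji; simp
      · rw [DirectSum.of_eq_of_ne _ _ _ hji]
        exact hcomp j hji
    have : f x = eqv (DirectSum.of (fun i => ↥(Mi i)) i ((eqv.symm (f x)) i)) := by
      conv_lhs => rw [← eqv.apply_symm_apply (f x)]
      rw [← hdec]
    rw [this, heqv_of]
    exact ((eqv.symm (f x)) i).2
  apply le_antisymm
  · intro n hn
    -- projection onto N along L
    set e : M →ₗ[R] M := N.subtype ∘ₗ (N.linearProjOfIsCompl L h) with he
    have hen : e n = n := by
      exact congrArg Subtype.val (Submodule.linearProjOfIsCompl_apply_left h ⟨n, hn⟩)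
    have heN : ∀ x, e x ∈ N := fun x => (N.linearProjOfIsCompl L h x).2
    set d := eqv.symm n with hd
    have hn_sum : n = ∑ j ∈ DFinsupp.support d, ((d j : M)) := by
      conv_lhs => rw [← eqv.apply_symm_apply n]
      rw [← hd]
      conv_lhs => rw [← DirectSum.sum_support_of d]
      rw [map_sum]
      exact Finset.sum_congr rfl fun j _ => heqv_of j (d j)
    have : n = ∑ j ∈ DFinsupp.support d, e ((d j : M)) := by
      rw [← map_sum, ← hn_sum, hen]
    rw [this]
    refine Submodule.sum_mem _ fun j _ => ?_
    have hmem : e ((d j : M)) ∈ N ⊓ Mi j := ⟨heN _, hfi e j _ (d j).2⟩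
    exact Submodule.mem_iSup_of_mem j hmem
  · exact iSup_le fun i => inf_le_left
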